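/- The map I ↦ τ_I is a lattice isomorphism from the lattice of ideals of A* containing A^k (ordered by inclusion, with meet = intersection and join = union) onto the lattice of special right congruences on A^k. -/
import Mathlib


/-- Words of length `k` over `A`. -/
abbrev Word (A : Type*) (k : ℕ) := {w : List A // w.length = k}

/-- The shift action of a letter: `u.a` is the suffix of length `k` of `u a`. -/
def act {A : Type*} (k : ℕ) (a : A) (u : Word A k) : Word A k :=
  ⟨(u.val ++ [a]).drop ((u.val ++ [a]).length - k), by
    have h := u.2
    simp only [List.length_drop, List.length_append, List.length_cons,
      List.length_nil, h]
    omega⟩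

/-- A right congruence on `A^k`: an equivalence relation compatible with the
shift action. -/
def IsRC {A : Type*} (k : ℕ) (r : Word A k → Word A k → Prop) : Prop :=
  Equivalence r ∧ ∀ u v : Word A k, r u v → ∀ a : A, r (act k a u) (act k a v)

/-- The relation `τ_I` on `A^k`: a common suffix in `I`. -/
def tauW {A : Type*} (k : ℕ) (I : Set (List A)) (u v : Word A k) : Prop :=
  ∃ w ∈ I, w <:+ u.val ∧ w <:+ v.val

/-- Ideals of `A*` containing `A^k`. -/
def IsIdealK {A : Type*} (k : ℕ) (I : Set (List A)) : Prop :=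
  (∀ u v w : List A, w ∈ I → u ++ w ++ v ∈ I) ∧ (∀ w : List A, w.length = k → w ∈ I)

lemma mem_of_suffix_mem {A : Type*} {k : ℕ} {I : Set (List A)} (hI : IsIdealK k I)
    {w w' : List A} (h : w' <:+ w) (hw : w' ∈ I) : w ∈ I := by
  obtain ⟨p, rfl⟩ := h
  simpa using hI.1 p [] w' hw

lemma suffix_drop_of_suffix {A : Type*} {l s : List A} (n : ℕ) (h : s <:+ l)
    (hn : s.length ≤ l.length - n) : s <:+ l.drop n := by
  rcases List.suffix_or_suffix_of_suffix h (List.drop_suffix n l) with h1 | h1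
  · exact h1
  · have := h1.length_le
    have hlen : (l.drop n).length = s.length := by
      simp only [List.length_drop] at *; omega
    exact (List.IsSuffix.eq_of_length h1 hlen) ▸ List.suffix_refl _

/-- `I ↦ τ_I` is a lattice isomorphism from the lattice of ideals of
`A*` containing `A^k` (ordered by inclusion, meet = `∩`, join = `∪`) onto the
lattice of special right congruences on `A^k`. -/
theorem tauW_lattice_iso {A : Type*} [Fintype A] (hA : 1 < Fintype.card A)
    (k : ℕ) (hk : 1 ≤ k) :
    -- each `τ_I` is a (special) right congruence
    (∀ I : Set (List A), IsIdealK k I → IsRC k (tauW k I)) ∧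
    -- the map is an order isomorphism (in particular injective)
    (∀ I J : Set (List A), IsIdealK k I → IsIdealK k J →
      (I ⊆ J ↔ ∀ u v : Word A k, tauW k I u v → tauW k J u v)) ∧
    -- meets are preserved
    (∀ I J : Set (List A), IsIdealK k I → IsIdealK k J →
      ∀ u v : Word A k, tauW k (I ∩ J) u v ↔ tauW k I u v ∧ tauW k J u v) ∧
    -- joins are preserved (the join in `RC(A^k)` of `τ_I` and `τ_J` is their union)
    (∀ I J : Set (List A), IsIdealK k I → IsIdealK k J →
      ∀ u v : Word A k, tauW k (I ∪ J) u v ↔ tauW k I u v ∨ tauW k J u v) := by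
  have hrefl : ∀ (I : Set (List A)), IsIdealK k I → ∀ u : Word A k, tauW k I u u := by
    intro I hI u
    exact ⟨u.val, hI.2 u.val u.2, List.suffix_refl _, List.suffix_refl _⟩
  refine ⟨?_, ?_, ?_, ?_⟩
  · -- right congruence
    intro I hI
    constructor
    · refine ⟨hrefl I hI, ?_, ?_⟩
      · rintro u v ⟨w, hw, h1, h2⟩; exact ⟨w, hw, h2, h1⟩
      · rintro u v t ⟨w1, hw1, hu1, hv1⟩ ⟨w2, hw2, hv2, ht2⟩
        rcases List.suffix_or_suffix_of_suffix hv1 hv2 with h | h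
        · exact ⟨w1, hw1, hu1, h.trans ht2⟩
        · exact ⟨w2, hw2, h.trans hu1, ht2⟩
    · rintro u v ⟨w, hw, hu, hv⟩ a
      have hwlen : w.length ≤ k := u.2 ▸ hu.length_le
      rcases eq_or_lt_of_le hwlen with heq | hlt
      · -- w has length k, so u = v
        have hu' : w = u.val := List.IsSuffix.eq_of_length hu (by rw [heq, u.2])
        have hv' : w = v.val := List.IsSuffix.eq_of_length hv (by rw [heq, v.2])
        have : u = v := Subtype.ext (hu' ▸ hv')
        rw [this]
        exact hrefl I hI _
      · refine ⟨w ++ [a], by simpa using hI.1 [] [a] w hw, ?_, ?_⟩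
        · apply suffix_drop_of_suffix
          · obtain ⟨p, hp⟩ := hu
            exact ⟨p, by rw [← List.append_assoc, hp]⟩
          · simp [u.2]; omega
        · apply suffix_drop_of_suffix
          · obtain ⟨p, hp⟩ := hv
            exact ⟨p, by rw [← List.append_assoc, hp]⟩
          · simp [v.2]; omega
  · -- order iso
    intro I J hI hJ
    constructor
    · rintro hIJ u v ⟨w, hw, h1, h2⟩; exact ⟨w, hIJ hw, h1, h2⟩
    · intro h w hw
      by_cases hlen : k ≤ w.length
      · -- every word of length ≥ k is in J
        have : w.drop (w.length - k) ∈ J := hJ.2 _ (by simp; omega)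
        exact mem_of_suffix_mem hJ (List.drop_suffix _ _) this
      · push_neg at hlen
        obtain ⟨a, b, hab⟩ := Fintype.exists_pair_of_one_lt_card hA
        set m := k - w.length with hm
        have hm1 : 1 ≤ m := by omega
        have hulen : (List.replicate m a ++ w).length = k := by simp; omega
        have hvlen : (List.replicate m b ++ w).length = k := by simp; omega
        set u : Word A k := ⟨List.replicate m a ++ w, hulen⟩
        set v : Word A k := ⟨List.replicate m b ++ w, hvlen⟩
        obtain ⟨w', hw'J, h1, h2⟩ :=
          h u v ⟨w, hw, List.suffix_append _ _, List.suffix_append _ _⟩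
        -- w' is a common suffix of u and v; show w' <:+ w
        have hsw : w' <:+ w := by
          have hwu : w <:+ u.val := List.suffix_append _ _
          rcases List.suffix_or_suffix_of_suffix h1 hwu with hc | hc
          · exact hc
          · -- w <:+ w' : derive a contradiction unless w' = w
            rcases eq_or_lt_of_le hc.length_le with heq | hlt'
            · exact (List.IsSuffix.eq_of_length hc heq) ▸ List.suffix_refl _
            · exfalso
              obtain ⟨p, hp⟩ := hc
              have hpne : p ≠ [] := by
                intro hpe
                have : w.length = w'.length := by rw [← hp, hpe]; simp
                omega
              -- p is a suffix of replicate m a and of replicate m b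
              have hpa : p <:+ List.replicate m a := by
                obtain ⟨q, hq⟩ := h1
                rw [← hp] at hq
                have : q ++ p = List.replicate m a := by
                  have := hq
                  rw [← List.append_assoc] at this
                  exact List.append_cancel_right (this.trans rfl)
                exact this ▸ List.suffix_append q p
              have hpb : p <:+ List.replicate m b := by
                obtain ⟨q, hq⟩ := h2
                rw [← hp] at hq
                have : q ++ p = List.replicate m b := by
                  have := hq
                  rw [← List.append_assoc] at this
                  exact List.append_cancel_right (this.trans rfl)
                exact this ▸ List.suffix_append q p
              obtain ⟨x, hx⟩ := List.exists_mem_of_ne_nil p hpne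
              have hxa : x = a := List.eq_of_mem_replicate (hpa.mem hx)
              have hxb : x = b := List.eq_of_mem_replicate (hpb.mem hx)
              exact hab (hxa ▸ hxb)
        exact mem_of_suffix_mem hJ hsw hw'J
  · -- meets
    intro I J hI hJ u v
    constructor
    · rintro ⟨w, ⟨hwI, hwJ⟩, h1, h2⟩
      exact ⟨⟨w, hwI, h1, h2⟩, ⟨w, hwJ, h1, h2⟩⟩
    · rintro ⟨⟨w1, hw1, hu1, hv1⟩, ⟨w2, hw2, hu2, hv2⟩⟩
      rcases List.suffix_or_suffix_of_suffix hu1 hu2 with h | h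
      · exact ⟨w2, ⟨mem_of_suffix_mem hI h hw1, hw2⟩, hu2, hv2⟩
      · exact ⟨w1, ⟨hw1, mem_of_suffix_mem hJ h hw2⟩, hu1, hv1⟩
  · -- joins
    intro I J hI hJ u v
    constructor
    · rintro ⟨w, (hw | hw), h1, h2⟩
      · exact Or.inl ⟨w, hw, h1, h2⟩
      · exact Or.inr ⟨w, hw, h1, h2⟩
    · rintro (⟨w, hw, h1, h2⟩ | ⟨w, hw, h1, h2⟩)
      · exact ⟨w, Or.inl hw, h1, h2⟩
      · exact ⟨w, Or.inr hw, h1, h2⟩
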